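/- Let K be a quadratic number field with ring of integers O_K, let p ≥ 17 be a prime, and let (a, b, c) ∈ O_K³ be a non-trivial solution of a^p + b^p + c^p = 0. Let 𝔓 be a prime ideal of O_K dividing 2 such that 𝔓 does not divide the ideal aO_K + bO_K + cO_K, and let j be the j-invariant of the Frey curve E: Y² = X(X − a^p)(X + b^p). Then ord_𝔓(j) < 0 (i.e., E has potentially multiplicative reduction at 𝔓) if and only if either the residue field of 𝔓 has 2 elements, or the residue field of 𝔓 has 4 elements and 𝔓 divides abc. Moreover, when ord_𝔓(j) < 0 one has ord_𝔓(j) = 8·ord_𝔓(2) − 2p·ord_𝔓(abc); in particular p does not divide ord_𝔓(j). -/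

import Mathlib

open NumberField IsDedekindDomain

open scoped Classical in
/-- The normalized `v`-adic valuation `ord_v : K → ℤ ∪ {+∞}` on the fraction field `K`
of a Dedekind domain `R`, attached to a non-zero prime `v` of `R`; `ord_v (0) = +∞`. -/
noncomputable def ordAt {R : Type*} [CommRing R] [IsDedekindDomain R] {K : Type*} [Field K]
    [Algebra R K] [IsFractionRing R K] (v : HeightOneSpectrum R) (x : K) : WithTop ℤ :=
  if hx : x = 0 then ⊤
  else ((-Multiplicative.toAdd (WithZero.unzero (((v.valuation K).ne_zero_iff).mpr hx)) : ℤ) : WithTop ℤ)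

section FreyHelpers

open Multiplicative

local notation "ℤₘ₀" => WithZero (Multiplicative ℤ)

variable {R : Type*} [CommRing R] [IsDedekindDomain R] {K : Type*} [Field K]
    [Algebra R K] [IsFractionRing R K] (v : HeightOneSpectrum R)

lemma ordAt_eq_of_valuation {x : K} (hx : x ≠ 0) {n : ℤ}
    (h : v.valuation K x = ((Multiplicative.ofAdd (-n) : Multiplicative ℤ) : ℤₘ₀)) :
    ordAt v x = (n : WithTop ℤ) := by
  rw [ordAt, dif_neg hx]
  have h2 : WithZero.unzero (((v.valuation K).ne_zero_iff (x := x)).mpr hx)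
      = Multiplicative.ofAdd (-n) := by
    rw [← WithZero.coe_inj, WithZero.coe_unzero, h]
  rw [h2, toAdd_ofAdd, neg_neg]

lemma intVal_spec (r : R) (hr : r ≠ 0) :
    ∃ n : ℕ, v.intValuation r = ((Multiplicative.ofAdd (-(n : ℤ)) : Multiplicative ℤ) : ℤₘ₀)
      ∧ (0 < n ↔ r ∈ v.asIdeal) ∧ v.asIdeal ^ n ∣ Ideal.span {r} := by
  classical
  refine ⟨(Associates.mk v.asIdeal).count (Associates.mk (Ideal.span {r})).factors, ?_, ?_, ?_⟩
  · exact v.intValuation_if_neg hr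
  · rw [← Ideal.dvd_span_singleton, ← v.intValuation_lt_one_iff_dvd, v.intValuation_if_neg hr,
      WithZero.exp_eq_coe_ofAdd]
    rw [show (1:ℤₘ₀) = ((ofAdd (0:ℤ) : Multiplicative ℤ) : ℤₘ₀) from rfl, WithZero.coe_lt_coe,
      Multiplicative.ofAdd_lt]
    omega
  · exact (v.intValuation_le_pow_iff_dvd r _).mp (le_of_eq (v.intValuation_if_neg hr))

lemma intVal_mul {x y : R} {m n : ℤ}
    (hx : v.intValuation x = ((ofAdd (-m) : Multiplicative ℤ) : ℤₘ₀))
    (hy : v.intValuation y = ((ofAdd (-n) : Multiplicative ℤ) : ℤₘ₀)) :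
    v.intValuation (x * y) = ((ofAdd (-(m + n)) : Multiplicative ℤ) : ℤₘ₀) := by
  rw [map_mul, hx, hy, ← WithZero.coe_mul]
  congr 1
  rw [← ofAdd_add]
  congr 1
  ring

lemma intVal_pow {x : R} {m : ℤ}
    (hx : v.intValuation x = ((ofAdd (-m) : Multiplicative ℤ) : ℤₘ₀)) (k : ℕ) :
    v.intValuation (x ^ k) = ((ofAdd (-((k : ℤ) * m)) : Multiplicative ℤ) : ℤₘ₀) := by
  rw [map_pow, hx, ← WithZero.coe_pow]
  congr 1
  rw [← ofAdd_nsmul]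
  congr 1
  ring

lemma pow_div_ofAdd (x y : ℤ) (k : ℕ) :
    (((ofAdd (-x) : Multiplicative ℤ) : ℤₘ₀)) ^ k / ((ofAdd (-y) : Multiplicative ℤ) : ℤₘ₀)
      = ((ofAdd (-((k : ℤ) * x - y)) : Multiplicative ℤ) : ℤₘ₀) := by
  rw [← WithZero.coe_pow, ← WithZero.coe_div]
  congr 1
  rw [← ofAdd_nsmul, ← ofAdd_sub]
  congr 1
  ring

lemma eq_one_of_card_two {F : Type*} [Field F] (h : Nat.card F = 2) {x : F} (hx : x ≠ 0) :
    x = 1 := by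
  have hfin : Finite F := Nat.finite_of_card_ne_zero (by omega)
  have := Fintype.ofFinite F
  have hc : Fintype.card F = 2 := by rw [← Nat.card_eq_fintype_card]; exact h
  have hpow := FiniteField.pow_card_sub_one_eq_one x hx
  rw [hc] at hpow
  simpa using hpow

lemma card_two_contra {R : Type*} [CommRing R] [IsDedekindDomain R]
    (v : HeightOneSpectrum R) (h2 : Nat.card (R ⧸ v.asIdeal) = 2)
    (hv2 : (2 : R) ∈ v.asIdeal) (p : ℕ) {a b c : R}
    (hfermat : a ^ p + b ^ p + c ^ p = 0)
    (hma : a ∉ v.asIdeal) (hmb : b ∉ v.asIdeal) (hmc : c ∉ v.asIdeal) : False := by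
  haveI : v.asIdeal.IsMaximal := v.isMaximal
  letI : Field (R ⧸ v.asIdeal) := Ideal.Quotient.field _
  set π := Ideal.Quotient.mk v.asIdeal with hπ
  have h1a : π a ≠ 0 := fun h => hma (Ideal.Quotient.eq_zero_iff_mem.mp h)
  have h1b : π b ≠ 0 := fun h => hmb (Ideal.Quotient.eq_zero_iff_mem.mp h)
  have h1c : π c ≠ 0 := fun h => hmc (Ideal.Quotient.eq_zero_iff_mem.mp h)
  have hsum : π a ^ p + π b ^ p + π c ^ p = 0 := by
    rw [← map_pow, ← map_pow, ← map_pow, ← map_add, ← map_add, hfermat, map_zero]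
  rw [eq_one_of_card_two h2 h1a, eq_one_of_card_two h2 h1b, eq_one_of_card_two h2 h1c,
    one_pow] at hsum
  have h20 : (2 : R ⧸ v.asIdeal) = 0 := by
    have := Ideal.Quotient.eq_zero_iff_mem.mpr hv2
    rw [map_ofNat] at this; exact this
  have h10 : (1 : R ⧸ v.asIdeal) = 0 := by linear_combination hsum - h20
  exact one_ne_zero h10

end FreyHelpers

/-- **Potentially multiplicative reduction of the Frey curve at primes above 2 (Lemma 4.2).**
Let `K` be a quadratic number field, `p ≥ 17` a prime, `(a, b, c)` a non-trivial solution
of `a ^ p + b ^ p + c ^ p = 0` in `𝓞 K`, and `𝔓 ∣ 2` a prime of `𝓞 K` not dividing the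
ideal `(a, b, c)`. Let `j = c₄³/Δ` be the `j`-invariant of the Frey curve
`Y² = X(X − aᵖ)(X + bᵖ)`. Then `ord_𝔓(j) < 0` if and only if the residue field of `𝔓`
has `2` elements, or it has `4` elements and `𝔓 ∣ abc`. Moreover, if `ord_𝔓(j) < 0`,
then `ord_𝔓(j) = 8 ord_𝔓(2) − 2p · ord_𝔓(abc)`; in particular `p ∤ ord_𝔓(j)`. -/
theorem frey_curve_potentially_multiplicative_at_two (K : Type*) [Field K] [NumberField K]
    (hdeg : Module.finrank ℚ K = 2)
    (p : ℕ) (hp : p.Prime) (hp17 : 17 ≤ p)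
    (a b c : 𝓞 K) (habc : a * b * c ≠ 0) (hfermat : a ^ p + b ^ p + c ^ p = 0)
    (v : HeightOneSpectrum (𝓞 K)) (hv2 : (2 : 𝓞 K) ∈ v.asIdeal)
    (hndvd : ¬ v.asIdeal ∣ Ideal.span ({a, b, c} : Set (𝓞 K)))
    (j : K) (hj : j = (algebraMap (𝓞 K) K (16 * (a ^ (2 * p) - b ^ p * c ^ p))) ^ 3 /
      algebraMap (𝓞 K) K (16 * a ^ (2 * p) * b ^ (2 * p) * c ^ (2 * p))) :
    (ordAt v j < 0 ↔
      Nat.card (𝓞 K ⧸ v.asIdeal) = 2 ∨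
      (Nat.card (𝓞 K ⧸ v.asIdeal) = 4 ∧ a * b * c ∈ v.asIdeal)) ∧
    (ordAt v j < 0 →
      ∃ t₂ t : ℤ, ordAt v (algebraMap (𝓞 K) K 2) = t₂ ∧
        ordAt v (algebraMap (𝓞 K) K (a * b * c)) = t ∧
        ordAt v j = ((8 * t₂ - 2 * p * t : ℤ) : WithTop ℤ) ∧
        ¬ ((p : ℤ) ∣ 8 * t₂ - 2 * p * t)) := by
  classical
  have hppos : 0 < p := hp.pos
  have ha : a ≠ 0 := fun h => habc (by rw [h]; ring)
  have hb : b ≠ 0 := fun h => habc (by rw [h]; ring)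
  have hc : c ≠ 0 := fun h => habc (by rw [h]; ring)
  have h2ne : (2 : 𝓞 K) ≠ 0 := two_ne_zero
  obtain ⟨ta, hva, hpa, -⟩ := intVal_spec v a ha
  obtain ⟨tb, hvb, hpb, -⟩ := intVal_spec v b hb
  obtain ⟨tc, hvc, hpc, -⟩ := intVal_spec v c hc
  obtain ⟨t₂, hv2', hp2', hdvd2⟩ := intVal_spec v 2 h2ne
  have ht₂ : 0 < t₂ := hp2'.mpr hv2
  have hPrime : v.asIdeal.IsPrime := v.isPrime
  -- residue field cardinality facts
  have hN : Nat.card (𝓞 K ⧸ v.asIdeal) = Ideal.absNorm v.asIdeal := by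
    rw [Ideal.absNorm_apply, Submodule.cardQuot_apply]
  have hnorm2 : Ideal.absNorm (Ideal.span {(2 : 𝓞 K)}) = 4 := by
    rw [Ideal.absNorm_span_singleton]
    have hrank : Module.finrank ℤ (𝓞 K) = 2 := by
      rw [RingOfIntegers.rank, hdeg]
    have hbasis := Algebra.norm_algebraMap_of_basis (RingOfIntegers.basis K) (2 : ℤ)
    rw [Module.finrank_eq_card_chooseBasisIndex] at hrank
    rw [show ((2 : 𝓞 K)) = algebraMap ℤ (𝓞 K) 2 by simp, hbasis, hrank]
    norm_num
  have hdvd4 : Nat.card (𝓞 K ⧸ v.asIdeal) ^ t₂ ∣ 4 := by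
    rw [hN, ← map_pow, ← hnorm2]
    exact Ideal.absNorm_dvd_absNorm_of_le (Ideal.le_of_dvd hdvd2)
  have hN0 : Nat.card (𝓞 K ⧸ v.asIdeal) ≠ 0 := by
    rw [hN]
    simpa [Ideal.absNorm_eq_zero_iff] using v.ne_bot
  have hN1 : Nat.card (𝓞 K ⧸ v.asIdeal) ≠ 1 := by
    rw [hN]
    simpa [Ideal.absNorm_eq_one_iff] using (Ideal.IsMaximal.ne_top v.isMaximal)
  have hN2 : 2 ≤ Nat.card (𝓞 K ⧸ v.asIdeal) := by omega
  have ht₂2 : t₂ ≤ 2 := by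
    have h1 : 2 ^ t₂ ≤ Nat.card (𝓞 K ⧸ v.asIdeal) ^ t₂ := Nat.pow_le_pow_left hN2 _
    have h4 : Nat.card (𝓞 K ⧸ v.asIdeal) ^ t₂ ≤ 4 := Nat.le_of_dvd (by norm_num) hdvd4
    by_contra hgt
    push_neg at hgt
    have : 2 ^ 3 ≤ 2 ^ t₂ := Nat.pow_le_pow_right (by norm_num) hgt
    omega
  have hNdvd : Nat.card (𝓞 K ⧸ v.asIdeal) ∣ 4 :=
    dvd_trans (dvd_pow_self _ (by omega)) hdvd4
  have hN24 : Nat.card (𝓞 K ⧸ v.asIdeal) = 2 ∨ Nat.card (𝓞 K ⧸ v.asIdeal) = 4 := by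
    have hle := Nat.le_of_dvd (by norm_num) hNdvd
    interval_cases h : Nat.card (𝓞 K ⧸ v.asIdeal)
    · left; rfl
    · exfalso; revert hNdvd; decide
    · right; rfl
  -- membership structure
  have hnotall : ¬(a ∈ v.asIdeal ∧ b ∈ v.asIdeal ∧ c ∈ v.asIdeal) := by
    rintro ⟨h1, h2, h3⟩
    refine hndvd ((Ideal.dvd_iff_le).mpr (Ideal.span_le.mpr ?_))
    intro x hx
    simp only [Set.mem_insert_iff, Set.mem_singleton_iff] at hx
    rcases hx with rfl | rfl | rfl <;> assumption
  have hab : ¬(a ∈ v.asIdeal ∧ b ∈ v.asIdeal) := by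
    rintro ⟨h1, h2⟩
    have h3 : c ^ p ∈ v.asIdeal := by
      have hc' : c ^ p = -(a ^ p + b ^ p) := by linear_combination hfermat
      rw [hc']
      exact neg_mem (add_mem (Ideal.pow_mem_of_mem _ h1 p hppos)
        (Ideal.pow_mem_of_mem _ h2 p hppos))
    exact hnotall ⟨h1, h2, hPrime.mem_of_pow_mem p h3⟩
  have hac : ¬(a ∈ v.asIdeal ∧ c ∈ v.asIdeal) := by
    rintro ⟨h1, h2⟩
    have h3 : b ^ p ∈ v.asIdeal := by
      have hb' : b ^ p = -(a ^ p + c ^ p) := by linear_combination hfermat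
      rw [hb']
      exact neg_mem (add_mem (Ideal.pow_mem_of_mem _ h1 p hppos)
        (Ideal.pow_mem_of_mem _ h2 p hppos))
    exact hnotall ⟨h1, hPrime.mem_of_pow_mem p h3, h2⟩
  have hbc : ¬(b ∈ v.asIdeal ∧ c ∈ v.asIdeal) := by
    rintro ⟨h1, h2⟩
    have h3 : a ^ p ∈ v.asIdeal := by
      have ha' : a ^ p = -(b ^ p + c ^ p) := by linear_combination hfermat
      rw [ha']
      exact neg_mem (add_mem (Ideal.pow_mem_of_mem _ h1 p hppos)
        (Ideal.pow_mem_of_mem _ h2 p hppos))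
    exact hnotall ⟨hPrime.mem_of_pow_mem p h3, h1, h2⟩
  have habcmem : a * b * c ∈ v.asIdeal ↔ (a ∈ v.asIdeal ∨ b ∈ v.asIdeal ∨ c ∈ v.asIdeal) := by
    constructor
    · intro h
      rcases hPrime.mem_or_mem h with h' | h'
      · rcases hPrime.mem_or_mem h' with h'' | h''
        · exact Or.inl h''
        · exact Or.inr (Or.inl h'')
      · exact Or.inr (Or.inr h')
    · rintro (h | h | h)
      · exact Ideal.mul_mem_right _ _ (Ideal.mul_mem_right _ _ h)
      · exact Ideal.mul_mem_right _ _ (Ideal.mul_mem_left _ _ h)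
      · exact Ideal.mul_mem_left _ _ h
  -- N = 2 implies v divides abc
  have hcard2 : Nat.card (𝓞 K ⧸ v.asIdeal) = 2 → a * b * c ∈ v.asIdeal := by
    intro h2
    by_contra hmem
    rw [habcmem] at hmem
    push_neg at hmem
    exact card_two_contra v h2 hv2 p hfermat hmem.1 hmem.2.1 hmem.2.2
  -- if v divides abc then the quantity a^{2p} - b^p c^p is a v-adic unit
  have hdiffmem : a * b * c ∈ v.asIdeal → a ^ (2 * p) - b ^ p * c ^ p ∉ v.asIdeal := by
    intro h hmem
    rcases habcmem.mp h with h' | h' | h'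
    · have hb' : b ∉ v.asIdeal := fun hx => hab ⟨h', hx⟩
      have hc' : c ∉ v.asIdeal := fun hx => hac ⟨h', hx⟩
      have h2 : b ^ p * c ^ p ∈ v.asIdeal := by
        have h1 : a ^ (2 * p) ∈ v.asIdeal := Ideal.pow_mem_of_mem _ h' _ (by omega)
        have := Ideal.sub_mem _ h1 hmem
        simpa using this
      rcases hPrime.mem_or_mem h2 with h3 | h3
      · exact hb' (hPrime.mem_of_pow_mem p h3)
      · exact hc' (hPrime.mem_of_pow_mem p h3)
    · have ha' : a ∉ v.asIdeal := fun hx => hab ⟨hx, h'⟩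
      have h1 : a ^ (2 * p) ∈ v.asIdeal := by
        have hbc' : b ^ p * c ^ p ∈ v.asIdeal :=
          Ideal.mul_mem_right _ _ (Ideal.pow_mem_of_mem _ h' p hppos)
        have := Ideal.add_mem _ hmem hbc'
        simpa using this
      exact ha' (hPrime.mem_of_pow_mem (2 * p) h1)
    · have ha' : a ∉ v.asIdeal := fun hx => hac ⟨hx, h'⟩
      have h1 : a ^ (2 * p) ∈ v.asIdeal := by
        have hbc' : b ^ p * c ^ p ∈ v.asIdeal :=
          Ideal.mul_mem_left _ _ (Ideal.pow_mem_of_mem _ h' p hppos)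
        have := Ideal.add_mem _ hmem hbc'
        simpa using this
      exact ha' (hPrime.mem_of_pow_mem (2 * p) h1)
  by_cases hD : a ^ (2 * p) - b ^ p * c ^ p = 0
  · -- degenerate case j = 0
    have hj0 : j = 0 := by rw [hj, hD]; simp
    have hord : ordAt v j = ⊤ := by rw [hj0, ordAt, dif_pos rfl]
    have hnotlt : ¬ ordAt v j < 0 := by rw [hord]; exact not_top_lt
    have habc' : a * b * c ∉ v.asIdeal := fun h =>
      (hdiffmem h) (by rw [hD]; exact zero_mem _)
    refine ⟨⟨fun h => absurd h hnotlt, ?_⟩, fun h => absurd h hnotlt⟩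
    rintro (h2 | ⟨h4, hm⟩)
    · exact absurd (hcard2 h2) habc'
    · exact absurd hm habc'
  · -- nondegenerate case
    obtain ⟨s, hvD, hpD, -⟩ := intVal_spec v _ hD
    have h16v : v.intValuation (16 : 𝓞 K)
        = ((Multiplicative.ofAdd (-(4 * (t₂ : ℤ))) : Multiplicative ℤ) : WithZero (Multiplicative ℤ)) := by
      rw [show (16 : 𝓞 K) = 2 ^ 4 by norm_num]
      simpa using intVal_pow v hv2' 4
    have hvA := intVal_mul v h16v hvD
    have hvB := intVal_mul v (intVal_mul v (intVal_mul v h16v (intVal_pow v hva (2 * p)))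
      (intVal_pow v hvb (2 * p))) (intVal_pow v hvc (2 * p))
    have hinj : Function.Injective (algebraMap (𝓞 K) K) := IsFractionRing.injective _ _
    have hAne : (16 : 𝓞 K) * (a ^ (2 * p) - b ^ p * c ^ p) ≠ 0 :=
      mul_ne_zero (by norm_num) hD
    have hBne : (16 : 𝓞 K) * a ^ (2 * p) * b ^ (2 * p) * c ^ (2 * p) ≠ 0 := by
      apply mul_ne_zero (mul_ne_zero (mul_ne_zero (by norm_num) (pow_ne_zero _ ha))
        (pow_ne_zero _ hb)) (pow_ne_zero _ hc)
    have hjne : j ≠ 0 := by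
      rw [hj]
      exact div_ne_zero (pow_ne_zero _ ((map_ne_zero_iff _ hinj).mpr hAne))
        ((map_ne_zero_iff _ hinj).mpr hBne)
    have hjval : v.valuation K j = ((Multiplicative.ofAdd
        (-((3 : ℤ) * (4 * (t₂ : ℤ) + (s : ℤ))
          - ((4 * (t₂ : ℤ) + (2 * p : ℕ) * (ta : ℤ)) + (2 * p : ℕ) * (tb : ℤ)
            + (2 * p : ℕ) * (tc : ℤ)))) : Multiplicative ℤ) : WithZero (Multiplicative ℤ)) := by
      rw [hj, map_div₀, map_pow, v.valuation_of_algebraMap, v.valuation_of_algebraMap,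
        hvA, hvB, pow_div_ofAdd]
      norm_num
    set E : ℤ := (3 : ℤ) * (4 * (t₂ : ℤ) + (s : ℤ))
          - ((4 * (t₂ : ℤ) + (2 * p : ℕ) * (ta : ℤ)) + (2 * p : ℕ) * (tb : ℤ)
            + (2 * p : ℕ) * (tc : ℤ)) with hE
    have hordj : ordAt v j = (E : WithTop ℤ) := ordAt_eq_of_valuation v hjne hjval
    have hlt : ordAt v j < 0 ↔ E < 0 := by
      rw [hordj]
      exact_mod_cast Iff.rfl
    -- relate E < 0 with divisibility of abc
    have hEabc : E < 0 ↔ a * b * c ∈ v.asIdeal := by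
      constructor
      · intro hE0
        by_contra hmem
        rw [habcmem] at hmem
        push_neg at hmem
        have hta0 : ta = 0 := Nat.eq_zero_of_not_pos (fun h => hmem.1 (hpa.mp h))
        have htb0 : tb = 0 := Nat.eq_zero_of_not_pos (fun h => hmem.2.1 (hpb.mp h))
        have htc0 : tc = 0 := Nat.eq_zero_of_not_pos (fun h => hmem.2.2 (hpc.mp h))
        rw [hE] at hE0
        push_cast [hta0, htb0, htc0] at hE0
        omega
      · intro hmem
        have hs0 : s = 0 := Nat.eq_zero_of_not_pos (fun h => (hdiffmem hmem) (hpD.mp h))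
        have ht1 : 0 < ta + tb + tc := by
          rcases habcmem.mp hmem with h | h | h
          · have := hpa.mpr h; omega
          · have := hpb.mpr h; omega
          · have := hpc.mpr h; omega
        rw [hE]
        push_cast [hs0]
        nlinarith [ht₂2, ht1, hp17]
    constructor
    · rw [hlt, hEabc]
      constructor
      · intro hmem
        rcases hN24 with h | h
        · exact Or.inl h
        · exact Or.inr ⟨h, hmem⟩
      · rintro (h2 | ⟨h4, hm⟩)
        · exact hcard2 h2
        · exact hm
    · intro hlt'
      have hmem : a * b * c ∈ v.asIdeal := hEabc.mp (hlt.mp hlt')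
      have hs0 : s = 0 := Nat.eq_zero_of_not_pos (fun h => (hdiffmem hmem) (hpD.mp h))
      refine ⟨(t₂ : ℤ), ((ta : ℤ) + tb + tc), ?_, ?_, ?_, ?_⟩
      · refine ordAt_eq_of_valuation v ((map_ne_zero_iff _ hinj).mpr h2ne) ?_
        rw [v.valuation_of_algebraMap, hv2']
      · refine ordAt_eq_of_valuation v ((map_ne_zero_iff _ hinj).mpr habc) ?_
        rw [v.valuation_of_algebraMap,
          intVal_mul v (intVal_mul v hva hvb) hvc]
      · rw [hordj]
        congr 1
        rw [hE]
        push_cast [hs0]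
        ring
      · intro hdvd
        have h1 : (p : ℤ) ∣ 2 * p * ((ta : ℤ) + tb + tc) := ⟨2 * ((ta : ℤ) + tb + tc), by ring⟩
        have h2 : (p : ℤ) ∣ 8 * (t₂ : ℤ) := by
          have := dvd_add hdvd h1
          simpa using this
        have h3 : (p : ℤ) ≤ 8 * (t₂ : ℤ) := Int.le_of_dvd (by positivity) h2
        have : (17 : ℤ) ≤ (p : ℤ) := by exact_mod_cast hp17
        omega
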